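/- Let G be a finite non-solvable group and x ∈ G such that the subgroup M generated by nil_G(x) is a maximal subgroup of G. Suppose the hypercenter Z*(G) of G is nontrivial and Z*(G) ≤ M. Then the cardinality of nil_G(x) is at least 12. -/

import Mathlib

/-- The nilpotentizer of `x` in `G`: the set of `y` such that `⟨x, y⟩` is nilpotent. -/
def nilpotentizer {G : Type*} [Group G] (x : G) : Set G :=
  {y | Group.IsNilpotent (Subgroup.closure ({x, y} : Set G))}

/-- The hypercenter of `G`: the terminal term of the upper central series of `G`
(for a finite group the series is eventually constant, so this supremum is
the stable value). -/
def hypercenter (G : Type*) [Group G] : Subgroup G :=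
  ⨆ n : ℕ, upperCentralSeries G n


section auxlemmas
open Subgroup

variable {G : Type*} [Group G]

lemma aux_ucs_inf (K : Subgroup G) : ∀ (n : ℕ) (k : K), (k : G) ∈ Subgroup.upperCentralSeries G n →
    k ∈ Subgroup.upperCentralSeries K n := by
  intro n
  induction n with
  | zero =>
      intro k hk
      have : (k : G) = 1 := by simpa using hk
      simpa using Subtype.ext this
  | succ n ih =>
      intro k hk
      rw [Subgroup.mem_upperCentralSeries_succ_iff] at hk ⊢
      intro g
      exact ih (k * g * k⁻¹ * g⁻¹) (by push_cast; exact hk g)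

lemma aux_hypercenter_attained [Finite G] :
    ∃ n : ℕ, hypercenter G = Subgroup.upperCentralSeries G n ∧
      ∀ m, Subgroup.upperCentralSeries G m ≤ Subgroup.upperCentralSeries G n := by
  obtain ⟨a, ⟨n, rfl⟩, ha⟩ : ∃ a ∈ Set.range (Subgroup.upperCentralSeries G), ∀ a' ∈ Set.range (Subgroup.upperCentralSeries G), id a ≤ id a' → id a = id a' := by
    obtain ⟨a, ha1, ha2⟩ := (Set.toFinite (Set.range (Subgroup.upperCentralSeries G))).exists_maximalFor
      id _ ⟨Subgroup.upperCentralSeries G 0, 0, rfl⟩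
    exact ⟨a, ha1, fun b hb hab => le_antisymm hab (ha2 hb hab)⟩
  refine ⟨n, ?_, ?_⟩
  · refine le_antisymm (iSup_le fun m => ?_) (le_iSup (Subgroup.upperCentralSeries G) n)
    rcases le_total m n with h | h
    · exact Subgroup.upperCentralSeries_mono G h
    · exact le_of_eq (ha _ ⟨m, rfl⟩ (Subgroup.upperCentralSeries_mono G h)).symm
  · intro m
    rcases le_total m n with h | h
    · exact Subgroup.upperCentralSeries_mono G h
    · exact le_of_eq (ha _ ⟨m, rfl⟩ (Subgroup.upperCentralSeries_mono G h)).symm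



lemma aux_nilpotent_of_ker_le_ucs {A B : Type*} [Group A] [Group B] (f : A →* B)
    [hB : Group.IsNilpotent B] (m : ℕ) (h : f.ker ≤ Subgroup.upperCentralSeries A m) :
    Group.IsNilpotent A := by
  obtain ⟨c, hc⟩ := hB.nilpotent'
  have key : ∀ j : ℕ, (Subgroup.upperCentralSeries B j).comap f ≤ Subgroup.upperCentralSeries A (m + j) := by
    intro j
    induction j with
    | zero =>
        intro a ha
        simp only [Nat.add_zero]
        exact h (by simpa [MonoidHom.mem_ker] using ha)
    | succ j ih =>
        intro a ha
        simp only [mem_comap, Subgroup.mem_upperCentralSeries_succ_iff] at ha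
        rw [show m + (j+1) = (m + j) + 1 by ring, Subgroup.mem_upperCentralSeries_succ_iff]
        intro g
        refine ih ?_
        simp only [mem_comap, commutatorElement_def, map_mul, map_inv]
        exact ha (f g)
  refine ⟨⟨m + c, ?_⟩⟩
  rw [eq_top_iff]
  intro a _
  exact key c (by simp [mem_comap, hc])

lemma aux_comm_of_card_le_five {H : Type*} [Group H] [Finite H]
    (h : Nat.card H ≤ 5) : ∀ a b : H, a * b = b * a := by
  have hpos : 0 < Nat.card H := Nat.card_pos
  set n := Nat.card H with hn
  have hcy : ∀ (_ : IsCyclic H), ∀ a b : H, a * b = b * a := by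
    intro hc a b
    letI := hc.commGroup
    exact mul_comm a b
  interval_cases n
  · intro a b
    have : Subsingleton H := Nat.card_eq_one_iff_unique.mp hn.symm |>.1
    exact Subsingleton.elim _ _
  · exact hcy (isCyclic_of_prime_card (p := 2) hn.symm)
  · exact hcy (isCyclic_of_prime_card (p := 3) hn.symm)
  · -- order 4
    by_cases h4 : ∃ g : H, orderOf g = 4
    · obtain ⟨g, hg⟩ := h4
      exact hcy (isCyclic_of_orderOf_eq_card g (by rw [hg, ← hn]))
    · push_neg at h4
      have hsq : ∀ a : H, a * a = 1 := by
        intro a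
        have hdvd : orderOf a ∣ 4 := hn ▸ orderOf_dvd_natCard a
        have hpos' : 0 < orderOf a := orderOf_pos a
        have hle : orderOf a ≤ 4 := Nat.le_of_dvd (by norm_num) hdvd
        interval_cases hoa : orderOf a
        · rw [orderOf_eq_one_iff] at hoa; rw [hoa, mul_one]
        · rw [← pow_two, ← hoa, pow_orderOf_eq_one]
        · norm_num at hdvd
        · exact (h4 a hoa).elim
      have inv_eq : ∀ c : H, c⁻¹ = c := fun c => inv_eq_of_mul_eq_one_right (hsq c)
      intro a b
      calc a * b = (a * b)⁻¹ := (inv_eq _).symm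
        _ = b⁻¹ * a⁻¹ := mul_inv_rev a b
        _ = b * a := by rw [inv_eq, inv_eq]
  · haveI : Fact (Nat.Prime 5) := ⟨by norm_num⟩
    exact hcy (isCyclic_of_prime_card (p := 5) hn.symm)

lemma aux_closure_pair_comm {H : Type*} [Group H] {a b : H} (h : a * b = b * a) :
    ∀ u ∈ closure ({a, b} : Set H), ∀ v ∈ closure ({a, b} : Set H), u * v = v * u := by
  have hsub : closure ({a, b} : Set H) ≤ centralizer {a, b} := by
    rw [closure_le]
    intro c hc
    rw [SetLike.mem_coe, mem_centralizer_iff]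
    intro d hd
    rcases hc with rfl | hc <;> rcases hd with rfl | hd
    · rfl
    · simp only [Set.mem_singleton_iff] at hd; subst hd; exact h.symm
    · simp only [Set.mem_singleton_iff] at hc; subst hc; exact h
    · simp only [Set.mem_singleton_iff] at hc hd; subst hc hd; rfl
  intro u hu v hv
  have : closure ({a, b} : Set H) ≤ centralizer {u} := by
    rw [closure_le]
    intro c hc
    rw [SetLike.mem_coe, mem_centralizer_iff]
    intro d hd
    simp only [Set.mem_singleton_iff] at hd
    subst hd
    have := (mem_centralizer_iff.mp (hsub hu)) c hc
    exact this.symm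
  exact mem_centralizer_iff.mp (this hv) u rfl


lemma aux_solvable_of_coatom {H : Type*} [Group H] [Finite H] (M : Subgroup H)
    (hM : IsCoatom M) (hc : Nat.card M ≤ 5) : IsSolvable H := by
  haveI hMsolv : Group.IsSolvable ↥M := isSolvable_of_comm (aux_comm_of_card_le_five hc)
  by_cases hnorm : M.Normal
  · haveI := hnorm
    have hsub : ∀ D : Subgroup (H ⧸ M), D = ⊥ ∨ D = ⊤ := by
      intro D
      have hle : M ≤ D.comap (QuotientGroup.mk' M) := by
        intro g hg
        simp only [mem_comap]
        have : (QuotientGroup.mk' M) g = 1 := by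
          simpa [QuotientGroup.eq_one_iff] using hg
        rw [this]; exact D.one_mem
      rcases hle.lt_or_eq with hlt | heq
      · right
        have htop := hM.2 _ hlt
        rw [← Subgroup.map_comap_eq_self_of_surjective (QuotientGroup.mk'_surjective M) D, htop]
        exact Subgroup.map_top_of_surjective _ (QuotientGroup.mk'_surjective M)
      · left
        rw [eq_bot_iff]
        intro d hd
        obtain ⟨g, rfl⟩ := QuotientGroup.mk'_surjective M d
        have hg : g ∈ M := by rw [heq]; simpa [mem_comap] using hd
        simpa using (QuotientGroup.eq_one_iff g).mpr hg
    haveI : Group.IsSolvable (H ⧸ M) := by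
      obtain ⟨h, hh⟩ : ∃ h : H, h ∉ M := by
        by_contra hcon; push_neg at hcon
        exact hM.1 ((Subgroup.eq_top_iff' M).mpr hcon)
      set g : H ⧸ M := QuotientGroup.mk h with hgdef
      have hg : g ≠ 1 := by simpa [hgdef, QuotientGroup.eq_one_iff] using hh
      have hzp : Subgroup.zpowers g = ⊤ := by
        rcases hsub (Subgroup.zpowers g) with h0 | h1
        · exact absurd (h0 ▸ Subgroup.mem_zpowers g) (by simp [hg])
        · exact h1
      haveI : IsCyclic (H ⧸ M) := ⟨⟨g, fun a => by rw [← Subgroup.mem_zpowers_iff, hzp]; exact Subgroup.mem_top a⟩⟩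
      letI := IsCyclic.commGroup (α := H ⧸ M)
      exact isSolvable_of_comm fun a b => mul_comm a b
    exact solvable_of_ker_le_range M.subtype (QuotientGroup.mk' M)
      (by rw [QuotientGroup.ker_mk', Subgroup.range_subtype])
  · have hMbot : M ≠ ⊥ := by rintro rfl; exact hnorm inferInstance
    have h2 : 2 ≤ Nat.card M := (Subgroup.one_lt_card_iff_ne_bot M).mpr hMbot
    obtain ⟨p, k, hp, hk1, hcard⟩ : ∃ p k, Nat.Prime p ∧ 1 ≤ k ∧ Nat.card M = p ^ k := by
      set n := Nat.card M with hn
      interval_cases n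
      · exact ⟨2, 1, by norm_num, le_refl 1, by omega⟩
      · exact ⟨3, 1, by norm_num, le_refl 1, by omega⟩
      · exact ⟨2, 2, by norm_num, by norm_num, by omega⟩
      · exact ⟨5, 1, by norm_num, le_refl 1, by omega⟩
    haveI : Fact p.Prime := ⟨hp⟩
    -- self-normalizing
    have hNM : Subgroup.normalizer (M : Set H) = M := by
      by_contra hne
      have hlt : M < Subgroup.normalizer (M : Set H) := lt_of_le_of_ne Subgroup.le_normalizer (Ne.symm hne)
      exact hnorm (Subgroup.normalizer_eq_top_iff.mp (hM.2 _ hlt))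
    -- M is Sylow
    have hpg : IsPGroup p M := IsPGroup.of_card hcard
    obtain ⟨P, hMP⟩ := hpg.exists_le_sylow
    have hMeqP : M = ↑P := by
      by_contra hne
      have hlt : M < ↑P := lt_of_le_of_ne hMP hne
      haveI : Group.IsNilpotent ↥(↑P : Subgroup H) := P.isPGroup'.isNilpotent
      have hlt' : M.subgroupOf ↑P < ⊤ := by
        rcases SetLike.exists_of_lt hlt with ⟨w, hwP, hwM⟩
        refine lt_top_iff_ne_top.mpr fun htop => hwM ?_
        have : (⟨w, hwP⟩ : ↥(↑P : Subgroup H)) ∈ M.subgroupOf ↑P := htop ▸ Subgroup.mem_top _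
        exact Subgroup.mem_subgroupOf.mp this
      obtain ⟨g, hg_in, hg_out⟩ :=
        SetLike.exists_of_lt (normalizerCondition_of_isNilpotent _ hlt')
      have hgN : (g : H) ∈ Subgroup.normalizer (M : Set H) := by
        rw [Subgroup.mem_normalizer_iff]
        intro h
        constructor
        · intro hh
          have := (Subgroup.mem_normalizer_iff.mp hg_in ⟨h, hMP hh⟩).mp
            (Subgroup.mem_subgroupOf.mpr hh)
          exact Subgroup.mem_subgroupOf.mp this
        · intro hh
          have hhP : h ∈ (↑P : Subgroup H) := by
            have h1 : (g:H) * h * (g:H)⁻¹ ∈ (↑P : Subgroup H) := hMP hh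
            have := mul_mem (mul_mem (inv_mem g.2) h1) g.2
            simpa [mul_assoc] using this
          have := (Subgroup.mem_normalizer_iff.mp hg_in ⟨h, hhP⟩).mpr
            (Subgroup.mem_subgroupOf.mpr (by exact hh))
          exact Subgroup.mem_subgroupOf.mp this
      exact hg_out (Subgroup.mem_subgroupOf.mpr (by rw [← hNM]; exact hgN))
    -- p-adic valuation of |H|
    have hfact : (Nat.card H).factorization p = k := by
      have hpm := P.card_eq_multiplicity
      rw [← hMeqP, hcard] at hpm
      exact (Nat.pow_right_injective hp.two_le hpm).symm
    -- Burnside transfer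
    have hcent : Subgroup.normalizer ((↑P : Subgroup H) : Set H) ≤ Subgroup.centralizer ((↑P : Subgroup H) : Set H) := by
      rw [← hMeqP, hNM]
      intro m hm
      rw [Subgroup.mem_centralizer_iff]
      intro h hh
      have hhM : h ∈ M := by exact hh
      have := aux_comm_of_card_le_five hc ⟨h, hhM⟩ ⟨m, hm⟩
      exact congrArg Subtype.val this
    set K := (MonoidHom.transferSylow P hcent).ker with hKdef
    have hcomp : K.IsComplement' ↑P := MonoidHom.ker_transferSylow_isComplement' P hcent
    have hcards : Nat.card K * Nat.card M = Nat.card H := by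
      have := hcomp.card_mul
      rwa [hMeqP]
    have hindex : K.index = Nat.card M := by
      have h1 := Subgroup.card_mul_index K
      have h0 : 0 < Nat.card K := Nat.card_pos
      exact Nat.eq_of_mul_eq_mul_left h0 (h1.trans hcards.symm)
    have hpK : ¬ p ∣ Nat.card K := by
      intro hdvd
      obtain ⟨c, hcK⟩ := hdvd
      have hdvd2 : p ^ (k + 1) ∣ Nat.card H := by
        refine ⟨c, ?_⟩
        rw [← hcards, hcard, hcK]
        ring
      rw [← hfact] at hdvd2
      exact Nat.pow_succ_factorization_not_dvd (Nat.card_pos (α := H)).ne' hp hdvd2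
    haveI hKnormal : K.Normal := hKdef ▸ MonoidHom.normal_ker _
    have hSylNorm : ∀ (q : ℕ) (_ : Fact q.Prime) (Q : Sylow q ↥K), (↑Q : Subgroup ↥K).Normal := by
      intro q hq Q
      by_cases hqK : q ∣ Nat.card ↥K
      · have hqp : q ≠ p := fun h => hpK (h ▸ hqK)
        set Q0 : Subgroup H := Subgroup.map K.subtype ↑Q with hQ0def
        have hfrat : Subgroup.normalizer (Q0 : Set H) ⊔ K = ⊤ := Sylow.normalizer_sup_eq_top Q
        set N' := Subgroup.normalizer (Q0 : Set H) with hN'def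
        have hdvdN : p ^ k ∣ Nat.card ↥N' := by
          have h3 : K.relIndex N' = Nat.card M := by
            rw [← hindex, ← Subgroup.relIndex_top_right (H := K), ← hfrat,
              Subgroup.relIndex_sup_right]
          rw [← hcard, ← h3]
          exact Subgroup.index_dvd_card (K.subgroupOf N')
        obtain ⟨R⟩ : Nonempty (Sylow p ↥N') := inferInstance
        set R0 := Subgroup.map N'.subtype ↑R with hR0def
        have hcardR0 : Nat.card ↥R0 = Nat.card ↥(↑R : Subgroup ↥N') :=
          (Nat.card_congr
            (Subgroup.equivMapOfInjective _ N'.subtype N'.subtype_injective).toEquiv).symm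
        have hR0card : Nat.card ↥R0 = p ^ k := by
          rw [hcardR0, R.card_eq_multiplicity]
          congr 1
          have hN0 : Nat.card ↥N' ≠ 0 := Nat.card_pos.ne'
          have hH0 : Nat.card H ≠ 0 := Nat.card_pos.ne'
          have hge : k ≤ (Nat.card ↥N').factorization p :=
            (Nat.Prime.pow_dvd_iff_le_factorization hp hN0).mp hdvdN
          have hle : (Nat.card ↥N').factorization p ≤ k := by
            rw [← hfact]
            refine (Nat.Prime.pow_dvd_iff_le_factorization hp hH0).mp ?_
            exact dvd_trans (Nat.ordProj_dvd _ p) (Subgroup.card_subgroup_dvd_card N')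
          omega
        set R1 : Sylow p H := Sylow.ofCard R0 (by rw [hR0card, hfact]) with hR1def
        obtain ⟨g, hg⟩ := MulAction.exists_smul_eq H R1 P
        set φ := (MulAut.conj g).toMonoidHom with hφdef
        have hMle : M ≤ Subgroup.map φ N' := by
          rw [hMeqP, ← hg]
          have hcoe : (↑(g • R1) : Subgroup H) = Subgroup.map φ R0 := by
            rw [Sylow.coe_subgroup_smul, Subgroup.pointwise_smul_def]
            rfl
          rw [hcoe]
          exact Subgroup.map_mono (Subgroup.map_subtype_le (↑R : Subgroup ↥N'))
        set Q1 := Subgroup.map φ Q0 with hQ1def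
        have hnq1 : Subgroup.normalizer (Q1 : Set H) = Subgroup.map φ N' := by
          rw [hQ1def, ← Subgroup.map_equiv_normalizer_eq Q0 (MulAut.conj g)]
        have hMleN : M ≤ Subgroup.normalizer (Q1 : Set H) := by rw [hnq1]; exact hMle
        have hQ1top : Subgroup.normalizer (Q1 : Set H) = ⊤ := by
          rcases hMleN.lt_or_eq with hlt | heq
          · exact hM.2 _ hlt
          · exfalso
            have hQ1le : Q1 ≤ M := heq ▸ Subgroup.le_normalizer
            have hq1 : q ∣ Nat.card ↥Q1 := by
              have e1 : Nat.card ↥Q1 = Nat.card ↥Q0 :=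
                (Nat.card_congr
                  (Subgroup.equivMapOfInjective _ φ (MulAut.conj g).injective).toEquiv).symm
              have e2 : Nat.card ↥Q0 = Nat.card ↥(↑Q : Subgroup ↥K) :=
                (Nat.card_congr
                  (Subgroup.equivMapOfInjective _ K.subtype K.subtype_injective).toEquiv).symm
              rw [e1, e2, Q.card_eq_multiplicity]
              exact dvd_pow_self q
                (Nat.Prime.factorization_pos_of_dvd hq.out Nat.card_pos.ne' hqK).ne'
            have hdvdM : Nat.card ↥Q1 ∣ p ^ k := hcard ▸ Subgroup.card_dvd_of_le hQ1le
            have hqpk : q ∣ p ^ k := dvd_trans hq1 hdvdM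
            exact hqp ((Nat.prime_dvd_prime_iff_eq hq.out hp).mp
              (Nat.Prime.dvd_of_dvd_pow hq.out hqpk))
        have hQ1norm : Q1.Normal := Subgroup.normalizer_eq_top_iff.mp hQ1top
        have hQ0eq : Subgroup.map (MulAut.conj g⁻¹).toMonoidHom Q1 = Q0 := by
          rw [hQ1def, hφdef, Subgroup.map_map]
          have : (MulAut.conj g⁻¹).toMonoidHom.comp (MulAut.conj g).toMonoidHom =
              MonoidHom.id H := by
            ext x
            simp
            group
          rw [this, Subgroup.map_id]
        have hQ0norm : Q0.Normal := by
          rw [← hQ0eq]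
          exact Subgroup.Normal.map hQ1norm _ (MulAut.conj g⁻¹).surjective
        constructor
        intro n hn kk
        have h1 : (↑n : H) ∈ Q0 := Subgroup.mem_map_of_mem _ hn
        have h2 : (↑kk : H) * ↑n * (↑kk : H)⁻¹ ∈ Q0 := hQ0norm.conj_mem _ h1 _
        obtain ⟨w, hw, hweq⟩ := h2
        have hwe : w = kk * n * kk⁻¹ := by
          apply Subtype.ext
          simpa using hweq
        rwa [← hwe]
      · have h1 : Nat.card ↥(↑Q : Subgroup ↥K) = 1 := by
          rw [Q.card_eq_multiplicity, Nat.factorization_eq_zero_of_not_dvd hqK, pow_zero]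
        have hQbot : (↑Q : Subgroup ↥K) = ⊥ := Subgroup.card_eq_one.mp h1
        rw [hQbot]
        infer_instance
    haveI hKnilp : Group.IsNilpotent ↥K :=
      ((isNilpotent_of_finite_tfae (G := ↥K)).out 3 0).mp (fun q hq Q => hSylNorm q hq Q)
    haveI hKsolv : Group.IsSolvable ↥K := inferInstance
    haveI : Group.IsSolvable (H ⧸ K) := by
      refine isSolvable_of_comm ?_
      have hq : Nat.card (H ⧸ K) = Nat.card M := by
        rw [← hindex, Subgroup.index_eq_card]
      exact aux_comm_of_card_le_five (hq ▸ hc)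
    exact solvable_of_ker_le_range K.subtype (QuotientGroup.mk' K)
      (by rw [QuotientGroup.ker_mk', Subgroup.range_subtype])

end auxlemmas

theorem stmt_18 {G : Type*} [Group G] [Finite G] (hG : ¬ IsSolvable G) (x : G)
    (hmax : IsCoatom (Subgroup.closure (nilpotentizer x)))
    (hZ : hypercenter G ≠ ⊥)
    (hZM : hypercenter G ≤ Subgroup.closure (nilpotentizer x)) :
    12 ≤ Nat.card (nilpotentizer x) := by
  classical
  obtain ⟨n₀, hZeq, hbound⟩ := aux_hypercenter_attained (G := G)
  have hZeq' : hypercenter G = Subgroup.upperCentralSeries G n₀ := hZeq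
  set Z := hypercenter G with hZdef
  haveI hZnorm : Z.Normal := by
    have h : (Subgroup.upperCentralSeries G n₀).Normal := inferInstance
    rwa [← hZeq'] at h
  set π := QuotientGroup.mk' Z with hπdef
  have hπsurj : Function.Surjective π := QuotientGroup.mk'_surjective Z
  have hkerπ : π.ker = Z := QuotientGroup.ker_mk' Z
  -- kernels of restrictions land in the upper central series
  have hker : ∀ W : Subgroup G, (π.comp W.subtype).ker ≤ upperCentralSeries ↥W n₀ := by
    intro W w hw
    apply aux_ucs_inf
    rw [← hZeq']
    rw [MonoidHom.mem_ker, MonoidHom.comp_apply] at hw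
    have : (w : G) ∈ π.ker := hw
    rwa [hkerπ] at this
  have hmapZ : Subgroup.map π Z = ⊥ := by
    rw [Subgroup.map_eq_bot_iff, hkerπ]
  -- nilpotent subgroups joined with Z stay nilpotent
  have hnil_sup : ∀ S : Subgroup G, Group.IsNilpotent ↥S → Group.IsNilpotent ↥(S ⊔ Z) := by
    intro S hS
    have himg : ∀ w : ↥(S ⊔ Z), (π.comp (S ⊔ Z).subtype) w ∈ Subgroup.map π S := by
      intro w
      have h1 : π ↑w ∈ Subgroup.map π (S ⊔ Z) := Subgroup.mem_map_of_mem _ w.2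
      rwa [Subgroup.map_sup, hmapZ, sup_bot_eq] at h1
    haveI := hS
    haveI : Group.IsNilpotent ↥(Subgroup.map π S) :=
      nilpotent_of_surjective _ (π.subgroupMap_surjective S)
    refine aux_nilpotent_of_ker_le_ucs
      ((π.comp (S ⊔ Z).subtype).codRestrict (Subgroup.map π S) himg) n₀ ?_
    rw [MonoidHom.ker_codRestrict]
    exact hker (S ⊔ Z)
  -- nilpotentizer is closed under the corresponding joins
  have hsubset : ∀ y ∈ nilpotentizer x, ∀ w ∈ (Subgroup.closure {x, y} ⊔ Z),
      w ∈ nilpotentizer x := by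
    intro y hy w hw
    have hnilW : Group.IsNilpotent ↥(Subgroup.closure {x, y} ⊔ Z) :=
      hnil_sup _ hy
    have hle : Subgroup.closure {x, w} ≤ Subgroup.closure {x, y} ⊔ Z := by
      rw [Subgroup.closure_le]
      rintro c hc
      rcases hc with hc | hc
      · rw [hc]
        refine SetLike.mem_coe.mpr ?_
        exact (le_sup_left : Subgroup.closure ({x, y} : Set G) ≤ Subgroup.closure ({x, y} : Set G) ⊔ Z)
          (Subgroup.subset_closure (Set.mem_insert _ _))
      · simp only [Set.mem_singleton_iff] at hc
        rw [hc]
        exact hw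
    show Group.IsNilpotent (Subgroup.closure {x, w})
    haveI := hnilW
    haveI : Group.IsNilpotent
        ↥((Subgroup.closure {x, w}).subgroupOf (Subgroup.closure {x, y} ⊔ Z)) :=
      Subgroup.isNilpotent _
    exact nilpotent_of_surjective (Subgroup.subgroupOfEquivOfLe hle).toMonoidHom
      (Subgroup.subgroupOfEquivOfLe hle).surjective
  set T := π '' (nilpotentizer x) with hT
  have hpre : π ⁻¹' T = nilpotentizer x := by
    apply Set.Subset.antisymm
    · rintro g hg
      obtain ⟨y, hy, hyg⟩ := hg
      have hz : y⁻¹ * g ∈ Z := by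
        have : π (y⁻¹ * g) = 1 := by
          rw [map_mul, map_inv, hyg, inv_mul_cancel]
        rwa [← hkerπ]
      refine hsubset y hy _ ?_
      have hy' : y ∈ Subgroup.closure {x, y} ⊔ Z :=
        (le_sup_left : Subgroup.closure ({x, y} : Set G) ≤ Subgroup.closure ({x, y} : Set G) ⊔ Z)
          (Subgroup.subset_closure (Set.mem_insert_of_mem _ rfl))
      have := mul_mem hy'
        ((le_sup_right : Z ≤ Subgroup.closure {x, y} ⊔ Z) hz)
      simpa using this
    · intro y hy
      exact ⟨y, hy, rfl⟩
  have hcardnil : Nat.card (nilpotentizer x) = Nat.card Z * Nat.card T := by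
    rw [← hpre]
    rw [show (π ⁻¹' T) = (QuotientGroup.mk ⁻¹' T : Set G) from rfl,
      Nat.card_congr (QuotientGroup.preimageMkEquivSubgroupProdSet Z T), Nat.card_prod]
  have hZ2 : 2 ≤ Nat.card Z := (Subgroup.one_lt_card_iff_ne_bot Z).mpr hZ
  by_cases hT6 : 6 ≤ Nat.card T
  · calc (12 : ℕ) ≤ 2 * Nat.card T := by omega
      _ ≤ Nat.card Z * Nat.card T := Nat.mul_le_mul_right _ hZ2
      _ = Nat.card (nilpotentizer x) := hcardnil.symm
  · exfalso
    have hT5 : Nat.card T ≤ 5 := by omega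
    set C := Subgroup.centralizer {π x} with hC
    have ha : ∀ y ∈ nilpotentizer x, π y ∈ C := by
      intro y hy
      set L := Subgroup.map π (Subgroup.closure {x, y} ⊔ Z) with hL
      have hLsub : (L : Set (G ⧸ Z)) ⊆ T := by
        rintro c ⟨w, hw, rfl⟩
        exact ⟨w, hsubset y hy w hw, rfl⟩
      have hcardL : Nat.card ↥L ≤ 5 :=
        le_trans (Nat.card_mono (Set.toFinite T) hLsub) hT5
      have hcomm := aux_comm_of_card_le_five hcardL
      have hxL : π x ∈ L := Subgroup.mem_map_of_mem _
        ((le_sup_left : Subgroup.closure ({x, y} : Set G) ≤ Subgroup.closure ({x, y} : Set G) ⊔ Z)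
          (Subgroup.subset_closure (Set.mem_insert _ _)))
      have hyL : π y ∈ L := Subgroup.mem_map_of_mem _
        ((le_sup_left : Subgroup.closure ({x, y} : Set G) ≤ Subgroup.closure ({x, y} : Set G) ⊔ Z)
          (Subgroup.subset_closure (Set.mem_insert_of_mem _ rfl)))
      rw [hC, Subgroup.mem_centralizer_iff]
      rintro c hc
      simp only [Set.mem_singleton_iff] at hc
      subst hc
      exact congrArg Subtype.val (hcomm ⟨π x, hxL⟩ ⟨π y, hyL⟩)
    have hb : ∀ g : G, π g ∈ C → g ∈ nilpotentizer x := by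
      intro g hg
      have hcomm_xg : π x * π g = π g * π x := by
        have := Subgroup.mem_centralizer_iff.mp hg (π x) rfl
        exact this
      have himg : ∀ w : ↥(Subgroup.closure {x, g} ⊔ Z),
          (π.comp (Subgroup.closure {x, g} ⊔ Z).subtype) w ∈
            Subgroup.closure ({π x, π g} : Set (G ⧸ Z)) := by
        intro w
        have h1 : π ↑w ∈ Subgroup.map π (Subgroup.closure {x, g} ⊔ Z) :=
          Subgroup.mem_map_of_mem _ w.2
        rwa [Subgroup.map_sup, hmapZ, sup_bot_eq, MonoidHom.map_closure,
          Set.image_insert_eq, Set.image_singleton] at h1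
      have hWnil : Group.IsNilpotent ↥(Subgroup.closure {x, g} ⊔ Z) := by
        refine ⟨⟨n₀ + 1, ?_⟩⟩
        rw [eq_top_iff]
        intro w _
        rw [mem_upperCentralSeries_succ_iff]
        intro u
        refine hker (Subgroup.closure {x, g} ⊔ Z) ?_
        rw [MonoidHom.mem_ker]
        have hcomm' := aux_closure_pair_comm hcomm_xg _ (himg w) _ (himg u)
        simp only [commutatorElement_def, map_mul, map_inv]
        rw [hcomm']
        group
      show Group.IsNilpotent (Subgroup.closure {x, g})
      have hle : Subgroup.closure {x, g} ≤ Subgroup.closure {x, g} ⊔ Z := le_sup_left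
      haveI := hWnil
      haveI : Group.IsNilpotent
          ↥((Subgroup.closure {x, g}).subgroupOf (Subgroup.closure {x, g} ⊔ Z)) :=
        Subgroup.isNilpotent _
      exact nilpotent_of_surjective (Subgroup.subgroupOfEquivOfLe hle).toMonoidHom
        (Subgroup.subgroupOfEquivOfLe hle).surjective
    have hset : nilpotentizer x = ↑(C.comap π) := by
      ext g
      constructor
      · intro hg
        exact ha g hg
      · intro hg
        exact hb g hg
    have hclosure : Subgroup.closure (nilpotentizer x) = C.comap π := by
      rw [hset, Subgroup.closure_eq]
    rw [hclosure] at hmax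
    have hCcoatom : IsCoatom C := by
      constructor
      · intro h
        rw [h, Subgroup.comap_top] at hmax
        exact hmax.1 rfl
      · intro D hD
        have hlt : C.comap π < D.comap π := by
          refine lt_of_le_of_ne (Subgroup.comap_mono hD.le) ?_
          intro h
          exact hD.ne (Subgroup.comap_injective hπsurj h)
        have htop := hmax.2 _ hlt
        have := Subgroup.map_comap_eq_self_of_surjective hπsurj D
        rw [← this, htop]
        exact Subgroup.map_top_of_surjective _ hπsurj
    have hCT : (C : Set (G ⧸ Z)) = T := by
      rw [hT, hset]
      rw [show (↑(C.comap π) : Set G) = π ⁻¹' ↑C from rfl,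
        Set.image_preimage_eq _ hπsurj]
    have hCcard : Nat.card C ≤ 5 := by
      have : Nat.card C = Nat.card T := by
        rw [← hCT]
        rfl
      omega
    haveI hGbar_solv : Group.IsSolvable (G ⧸ Z) := aux_solvable_of_coatom C hCcoatom hCcard
    haveI : Group.IsNilpotent ↥Z := by
      refine ⟨⟨n₀, ?_⟩⟩
      rw [eq_top_iff]
      intro w _
      refine aux_ucs_inf Z n₀ w ?_
      rw [← hZeq']
      exact w.2
    haveI : Group.IsSolvable ↥Z := inferInstance
    exact hG (solvable_of_ker_le_range Z.subtype π
      (by rw [hπdef, QuotientGroup.ker_mk', Subgroup.range_subtype]))
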